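/- Let L ⊆ N be modules over a commutative ring R and g ∈ R. If the map x ↦ gx is injective on N and multiplication by g maps L into L with the property L ∩ gN = gL, then |N/gN| = |(N/L)/g(N/L)| · |L/gL| whenever all these quotients are finite (equality of cardinalities, with the convention that the formula holds when the right side is finite). -/
import Mathlib


/-- Miles' index formula: for `R`-modules `L ⊆ N` and `g ∈ R` with `x ↦ gx` injective
on `N`, `gL ⊆ L` and `L ∩ gN = gL`, one has `|N/gN| = |(N/L)/g(N/L)| · |L/gL|`
whenever all these quotients are finite. -/
theorem miles_index_formula {R M : Type*} [CommRing R] [AddCommGroup M] [Module R M]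
    (L : Submodule R M) (g : R)
    (hinj : Function.Injective fun x : M => g • x)
    (hmap : Submodule.map (LinearMap.lsmul R M g) L ≤ L)
    (hcap : L ⊓ Submodule.map (LinearMap.lsmul R M g) ⊤ =
      Submodule.map (LinearMap.lsmul R M g) L)
    (h1 : Finite (M ⧸ Submodule.map (LinearMap.lsmul R M g) (⊤ : Submodule R M)))
    (h2 : Finite ((M ⧸ L) ⧸
      Submodule.map (LinearMap.lsmul R (M ⧸ L) g) (⊤ : Submodule R (M ⧸ L))))
    (h3 : Finite (↥L ⧸ Submodule.map (LinearMap.lsmul R ↥L g) (⊤ : Submodule R ↥L))) :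
    Nat.card (M ⧸ Submodule.map (LinearMap.lsmul R M g) (⊤ : Submodule R M)) =
      Nat.card ((M ⧸ L) ⧸
          Submodule.map (LinearMap.lsmul R (M ⧸ L) g) (⊤ : Submodule R (M ⧸ L))) *
        Nat.card (↥L ⧸ Submodule.map (LinearMap.lsmul R ↥L g) (⊤ : Submodule R ↥L)) := by
  set gM : Submodule R M := Submodule.map (LinearMap.lsmul R M g) ⊤ with hgMdef
  set T : Submodule R (M ⧸ L) := Submodule.map (LinearMap.lsmul R (M ⧸ L) g) ⊤ with hTdef
  set gL : Submodule R ↥L := Submodule.map (LinearMap.lsmul R ↥L g) ⊤ with hgLdef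
  -- the induced map f : M ⧸ gM → (M ⧸ L) ⧸ T
  have hle : gM ≤ LinearMap.ker (T.mkQ.comp L.mkQ) := by
    rintro x ⟨y, -, rfl⟩
    simp only [LinearMap.mem_ker, LinearMap.comp_apply, LinearMap.lsmul_apply]
    rw [Submodule.mkQ_apply, Submodule.Quotient.mk_eq_zero]
    exact ⟨L.mkQ y, trivial, by simp⟩
  set f : (M ⧸ gM) →ₗ[R] ((M ⧸ L) ⧸ T) := Submodule.liftQ gM (T.mkQ.comp L.mkQ) hle with hfdef
  have hfmk : ∀ x : M, f (Submodule.Quotient.mk x) = T.mkQ (L.mkQ x) := fun x => rfl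
  have hfsurj : Function.Surjective f := by
    intro z
    obtain ⟨w, rfl⟩ := T.mkQ_surjective z
    obtain ⟨x, rfl⟩ := L.mkQ_surjective w
    exact ⟨Submodule.Quotient.mk x, rfl⟩
  -- ψ : L → M ⧸ gM
  set ψ : ↥L →ₗ[R] (M ⧸ gM) := gM.mkQ.comp L.subtype with hψdef
  have hker : LinearMap.ker ψ = gL := by
    ext x
    constructor
    · intro hx
      have hx' : (x : M) ∈ gM := by
        simpa [ψ, Submodule.Quotient.mk_eq_zero] using hx
      have : (x : M) ∈ Submodule.map (LinearMap.lsmul R M g) L := by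
        rw [← hcap]; exact ⟨x.2, hx'⟩
      obtain ⟨y, hy, hyx⟩ := this
      refine ⟨⟨y, hy⟩, trivial, ?_⟩
      exact Subtype.ext hyx
    · rintro ⟨y, -, rfl⟩
      simp only [ψ, LinearMap.mem_ker, LinearMap.comp_apply, Submodule.coe_subtype,
        LinearMap.lsmul_apply, Submodule.coe_smul, Submodule.mkQ_apply,
        Submodule.Quotient.mk_eq_zero]
      exact ⟨(y : M), trivial, rfl⟩
  have hrange : LinearMap.range ψ = LinearMap.ker f := by
    ext z
    constructor
    · rintro ⟨x, rfl⟩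
      simp only [LinearMap.mem_ker, ψ, LinearMap.comp_apply, Submodule.coe_subtype,
        Submodule.mkQ_apply]
      rw [hfmk]
      have hx0 : L.mkQ (x : M) = 0 := (Submodule.Quotient.mk_eq_zero L).mpr x.2
      rw [hx0, map_zero]
    · intro hz
      obtain ⟨x, rfl⟩ := gM.mkQ_surjective z
      have hx : L.mkQ x ∈ T := by
        have := hz
        rw [LinearMap.mem_ker] at this
        rw [Submodule.mkQ_apply] at this
        rw [hfmk] at this
        simpa [Submodule.Quotient.mk_eq_zero] using this
      obtain ⟨w, -, hw⟩ := hx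
      obtain ⟨y, rfl⟩ := L.mkQ_surjective w
      have hxy : x - g • y ∈ L := by
        rw [← Submodule.Quotient.mk_eq_zero, Submodule.Quotient.mk_sub]
        have : (Submodule.Quotient.mk (g • y) : M ⧸ L) = L.mkQ x := by
          rw [← hw]; simp [LinearMap.lsmul_apply]
        rw [Submodule.mkQ_apply] at this
        rw [this]; simp
      refine ⟨⟨x - g • y, hxy⟩, ?_⟩
      have : (Submodule.Quotient.mk (x - g • y) : M ⧸ gM) = Submodule.Quotient.mk x := by
        rw [Submodule.Quotient.eq]
        exact ⟨-y, trivial, by simp [LinearMap.lsmul_apply, sub_sub_cancel_left]⟩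
      simpa [ψ] using this
  -- assemble
  have e1 : ((M ⧸ gM) ⧸ LinearMap.ker f) ≃ₗ[R] ((M ⧸ L) ⧸ T) :=
    f.quotKerEquivOfSurjective hfsurj
  have e2 : (↥L ⧸ gL) ≃ₗ[R] LinearMap.range ψ := by
    rw [← hker]; exact ψ.quotKerEquivRange
  calc Nat.card (M ⧸ gM)
      = Nat.card (LinearMap.ker f) * Nat.card ((M ⧸ gM) ⧸ LinearMap.ker f) :=
        Submodule.card_eq_card_quotient_mul_card _
    _ = Nat.card ((M ⧸ L) ⧸ T) * Nat.card (↥L ⧸ gL) := by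
        rw [Nat.card_congr e1.toEquiv, ← hrange, ← Nat.card_congr e2.toEquiv, mul_comm]
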